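/- In the biased majority model on the torus T_{n,n} with von Neumann neighborhood, if in some generation all blue cells are contained in a union of axis-aligned rectangles whose pairwise (Moore) distance is at least 2 and which do not cover all of V, then every red cell outside these rectangles remains red in all subsequent generations; in particular red survives forever. -/

import Mathlib

/-- Number of blue cells among the four von Neumann neighbors of `v` in the torus. -/
def vnCount (n : ℕ) (g : ZMod n × ZMod n → Bool) (v : ZMod n × ZMod n) : ℕ :=
  (if g (v.1 + 1, v.2) = true then 1 else 0) + (if g (v.1 - 1, v.2) = true then 1 else 0) +
    (if g (v.1, v.2 + 1) = true then 1 else 0) + (if g (v.1, v.2 - 1) = true then 1 else 0)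

/-- One synchronous step of the majority model on the torus `T_{n,n}` with von Neumann
neighborhood: strict majority among the 4 neighbors, ties conserve the current color. -/
def torusMajStep (n : ℕ) (g : ZMod n × ZMod n → Bool) : ZMod n × ZMod n → Bool :=
  fun v => if 2 < vnCount n g v then true else if vnCount n g v < 2 then false else g v

/-- One synchronous step of the biased majority model on the torus `T_{n,n}` with
von Neumann neighborhood: a cell becomes blue iff at least 2 of its 4 neighbors are blue. -/
def torusBMajStep (n : ℕ) (g : ZMod n × ZMod n → Bool) : ZMod n × ZMod n → Bool :=
  fun v => decide (2 ≤ vnCount n g v)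

/-- Moore (8-)adjacency on the torus `T_{n,n}`. -/
def mooreAdj (n : ℕ) (u v : ZMod n × ZMod n) : Prop :=
  u ≠ v ∧ (u.1 = v.1 ∨ u.1 = v.1 + 1 ∨ v.1 = u.1 + 1) ∧
    (u.2 = v.2 ∨ u.2 = v.2 + 1 ∨ v.2 = u.2 + 1)

/-- The Moore (8-)adjacency graph on the torus `T_{n,n}`. -/
def mooreGraph (n : ℕ) : SimpleGraph (ZMod n × ZMod n) where
  Adj := mooreAdj n
  symm := by
    refine ⟨?_⟩
    rintro u v ⟨h0, h1, h2⟩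
    exact ⟨Ne.symm h0, by tauto, by tauto⟩
  loopless := ⟨fun v h => h.1 rfl⟩

/-- An axis-aligned rectangle of cells in the torus `T_{n,n}`, of side lengths at most
`n - 2` (so that it is properly surrounded by cells outside it). -/
def IsRect (n : ℕ) (R : Set (ZMod n × ZMod n)) : Prop :=
  ∃ (a b : ZMod n) (l₁ l₂ : ℕ), l₁ + 2 ≤ n ∧ l₂ + 2 ≤ n ∧
    R = {v | ∃ i j : ℕ, i < l₁ ∧ j < l₂ ∧ v = (a + (i : ZMod n), b + (j : ZMod n))}

private lemma opp_aux {n l p : ℕ} (hl : l + 2 ≤ n) (hp : p < n)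
    (h1 : (p + 1) % n < l) (h2 : (p + (n - 1)) % n < l) : p < l := by
  rcases Nat.lt_or_ge (p + 1) n with h | h
  · rw [Nat.mod_eq_of_lt h] at h1; omega
  · have he : p + (n - 1) = n + (n - 2) := by omega
    rw [he, Nat.add_mod_left, Nat.mod_eq_of_lt (by omega)] at h2
    omega

private lemma rect_core {n l₁ l₂ P Q : ℕ} (h1 : l₁ + 2 ≤ n) (h2 : l₂ + 2 ≤ n)
    (hP : P < n) (hQ : Q < n) (hv : ¬(P < l₁ ∧ Q < l₂)) :
    ¬(((P+1)%n < l₁ ∧ Q < l₂) ∧ ((P+(n-1))%n < l₁ ∧ Q < l₂)) ∧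
    ¬(((P+1)%n < l₁ ∧ Q < l₂) ∧ (P < l₁ ∧ (Q+1)%n < l₂)) ∧
    ¬(((P+1)%n < l₁ ∧ Q < l₂) ∧ (P < l₁ ∧ (Q+(n-1))%n < l₂)) ∧
    ¬(((P+(n-1))%n < l₁ ∧ Q < l₂) ∧ (P < l₁ ∧ (Q+1)%n < l₂)) ∧
    ¬(((P+(n-1))%n < l₁ ∧ Q < l₂) ∧ (P < l₁ ∧ (Q+(n-1))%n < l₂)) ∧
    ¬((P < l₁ ∧ (Q+1)%n < l₂) ∧ (P < l₁ ∧ (Q+(n-1))%n < l₂)) :=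
  ⟨fun h => hv ⟨opp_aux h1 hP h.1.1 h.2.1, h.1.2⟩,
    fun h => hv ⟨h.2.1, h.1.2⟩, fun h => hv ⟨h.2.1, h.1.2⟩,
    fun h => hv ⟨h.2.1, h.1.2⟩, fun h => hv ⟨h.2.1, h.1.2⟩,
    fun h => hv ⟨h.1.1, opp_aux h2 hQ h.1.2 h.2.2⟩⟩

private lemma val_add_one {n : ℕ} (hn : 2 ≤ n) (x : ZMod n) :
    (x + 1).val = (x.val + 1) % n := by
  haveI : NeZero n := ⟨by omega⟩
  haveI : Fact (1 < n) := ⟨by omega⟩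
  rw [ZMod.val_add, ZMod.val_one]

private lemma val_sub_one {n : ℕ} (hn : 2 ≤ n) (x : ZMod n) :
    (x - 1).val = (x.val + (n - 1)) % n := by
  haveI : NeZero n := ⟨by omega⟩
  have hx : x - 1 = x + (-1) := by ring
  have hne : (-1 : ZMod n).val = n - 1 := by
    obtain ⟨m, rfl⟩ : ∃ m, n = m + 1 := ⟨n - 1, by omega⟩
    simp [ZMod.val_neg_one m]
  rw [hx, ZMod.val_add, hne]

private lemma rect_mem_iff {n : ℕ} {a b : ZMod n} {l₁ l₂ : ℕ} (h1 : l₁ + 2 ≤ n)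
    (h2 : l₂ + 2 ≤ n) (u : ZMod n × ZMod n) :
    u ∈ {v : ZMod n × ZMod n |
        ∃ i j : ℕ, i < l₁ ∧ j < l₂ ∧ v = (a + (i : ZMod n), b + (j : ZMod n))} ↔
      (u.1 - a).val < l₁ ∧ (u.2 - b).val < l₂ := by
  haveI : NeZero n := ⟨by omega⟩
  constructor
  · rintro ⟨i, j, hi, hj, rfl⟩
    constructor
    · show ((a + (i : ZMod n)) - a).val < l₁
      rw [add_sub_cancel_left, ZMod.val_natCast_of_lt (by omega)]
      exact hi
    · show ((b + (j : ZMod n)) - b).val < l₂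
      rw [add_sub_cancel_left, ZMod.val_natCast_of_lt (by omega)]
      exact hj
  · rintro ⟨hi, hj⟩
    refine ⟨(u.1 - a).val, (u.2 - b).val, hi, hj, ?_⟩
    rw [ZMod.natCast_rightInverse (u.1 - a), ZMod.natCast_rightInverse (u.2 - b)]
    have e1 : a + (u.1 - a) = u.1 := by ring
    have e2 : b + (u.2 - b) = u.2 := by ring
    rw [e1, e2]

private lemma rect_all {n : ℕ} {Ra : Set (ZMod n × ZMod n)} (hR : IsRect n Ra)
    (v : ZMod n × ZMod n) (hv : v ∉ Ra) :
    ¬((v.1+1, v.2) ∈ Ra ∧ (v.1-1, v.2) ∈ Ra) ∧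
    ¬((v.1+1, v.2) ∈ Ra ∧ (v.1, v.2+1) ∈ Ra) ∧
    ¬((v.1+1, v.2) ∈ Ra ∧ (v.1, v.2-1) ∈ Ra) ∧
    ¬((v.1-1, v.2) ∈ Ra ∧ (v.1, v.2+1) ∈ Ra) ∧
    ¬((v.1-1, v.2) ∈ Ra ∧ (v.1, v.2-1) ∈ Ra) ∧
    ¬((v.1, v.2+1) ∈ Ra ∧ (v.1, v.2-1) ∈ Ra) := by
  obtain ⟨a, b, l₁, l₂, h1, h2, rfl⟩ := hR
  have hn : 2 ≤ n := by omega
  haveI : NeZero n := ⟨by omega⟩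
  have e1 : (v.1 + 1 - a).val = ((v.1 - a).val + 1) % n := by
    have hx : v.1 + 1 - a = (v.1 - a) + 1 := by ring
    rw [hx, val_add_one hn]
  have e2 : (v.1 - 1 - a).val = ((v.1 - a).val + (n - 1)) % n := by
    have hx : v.1 - 1 - a = (v.1 - a) - 1 := by ring
    rw [hx, val_sub_one hn]
  have e3 : (v.2 + 1 - b).val = ((v.2 - b).val + 1) % n := by
    have hx : v.2 + 1 - b = (v.2 - b) + 1 := by ring
    rw [hx, val_add_one hn]
  have e4 : (v.2 - 1 - b).val = ((v.2 - b).val + (n - 1)) % n := by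
    have hx : v.2 - 1 - b = (v.2 - b) - 1 := by ring
    rw [hx, val_sub_one hn]
  have hv' : ¬((v.1 - a).val < l₁ ∧ (v.2 - b).val < l₂) :=
    fun h => hv ((rect_mem_iff h1 h2 v).2 h)
  simp only [rect_mem_iff h1 h2]
  simp only [e1, e2, e3, e4]
  exact rect_core h1 h2 (ZMod.val_lt _) (ZMod.val_lt _) hv'

private lemma moore_nbrs {n : ℕ} (hn : 2 ≤ n) (v : ZMod n × ZMod n) :
    (mooreGraph n).Adj (v.1+1, v.2) v ∧ (mooreGraph n).Adj (v.1-1, v.2) v ∧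
      (mooreGraph n).Adj (v.1, v.2+1) v ∧ (mooreGraph n).Adj (v.1, v.2-1) v := by
  haveI : Fact (1 < n) := ⟨by omega⟩
  have h10 : (1 : ZMod n) ≠ 0 := one_ne_zero
  refine ⟨⟨?_, Or.inr (Or.inl rfl), Or.inl rfl⟩,
    ⟨?_, Or.inr (Or.inr (by ring)), Or.inl rfl⟩,
    ⟨?_, Or.inl rfl, Or.inr (Or.inl rfl)⟩,
    ⟨?_, Or.inl rfl, Or.inr (Or.inr (by ring))⟩⟩
  · intro h
    exact h10 (by linear_combination congrArg Prod.fst h)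
  · intro h
    exact h10 (by linear_combination -(congrArg Prod.fst h))
  · intro h
    exact h10 (by linear_combination congrArg Prod.snd h)
  · intro h
    exact h10 (by linear_combination -(congrArg Prod.snd h))

private lemma pair_false {n : ℕ} {ι : Type*} (R : ι → Set (ZMod n × ZMod n))
    (hrect : ∀ a, IsRect n (R a))
    (hdist : ∀ a b : ι, a ≠ b → ∀ u ∈ R a, ∀ v ∈ R b, 3 ≤ (mooreGraph n).dist u v)
    (v w w' : ZMod n × ZMod n)
    (hw : w ∈ ⋃ a, R a) (hw' : w' ∈ ⋃ a, R a)
    (hadj : 2 ≤ n → (mooreGraph n).Adj w v) (hadj' : 2 ≤ n → (mooreGraph n).Adj w' v)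
    (hgeom : ∀ a, w ∈ R a → w' ∈ R a → False) : False := by
  obtain ⟨a, hwa⟩ := Set.mem_iUnion.1 hw
  obtain ⟨b, hwb⟩ := Set.mem_iUnion.1 hw'
  rcases eq_or_ne a b with rfl | hab
  · exact hgeom a hwa hwb
  · have hn : 2 ≤ n := by obtain ⟨_, _, l₁, l₂, hl1, _, _⟩ := hrect a; omega
    have hd := hdist a b hab w hwa w' hwb
    have hle := SimpleGraph.dist_le
      (SimpleGraph.Walk.cons (hadj hn) (SimpleGraph.Walk.cons ((hadj' hn).symm)
        SimpleGraph.Walk.nil))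
    simp only [SimpleGraph.Walk.length_cons, SimpleGraph.Walk.length_nil] at hle
    omega

private lemma count_le_one {n : ℕ} {ι : Type*} (R : ι → Set (ZMod n × ZMod n))
    (hrect : ∀ a, IsRect n (R a))
    (hdist : ∀ a b : ι, a ≠ b → ∀ u ∈ R a, ∀ v ∈ R b, 3 ≤ (mooreGraph n).dist u v)
    (g : ZMod n × ZMod n → Bool) (hcov : ∀ v, g v = true → v ∈ ⋃ a, R a)
    (v : ZMod n × ZMod n) (hv : v ∉ ⋃ a, R a) : vnCount n g v ≤ 1 := by
  by_contra hc
  push_neg at hc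
  have two : (g (v.1+1, v.2) = true ∧ g (v.1-1, v.2) = true) ∨
      (g (v.1+1, v.2) = true ∧ g (v.1, v.2+1) = true) ∨
      (g (v.1+1, v.2) = true ∧ g (v.1, v.2-1) = true) ∨
      (g (v.1-1, v.2) = true ∧ g (v.1, v.2+1) = true) ∨
      (g (v.1-1, v.2) = true ∧ g (v.1, v.2-1) = true) ∨
      (g (v.1, v.2+1) = true ∧ g (v.1, v.2-1) = true) := by
    simp only [vnCount] at hc
    cases hb1 : g (v.1+1, v.2) <;> cases hb2 : g (v.1-1, v.2) <;>
      cases hb3 : g (v.1, v.2+1) <;> cases hb4 : g (v.1, v.2-1) <;>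
      simp_all
  have key := fun a =>
    rect_all (hrect a) v (fun hm => hv (Set.mem_iUnion.2 ⟨a, hm⟩))
  have hm := fun hn' => moore_nbrs (n := n) hn' v
  rcases two with h | h | h | h | h | h
  · exact pair_false R hrect hdist v _ _ (hcov _ h.1) (hcov _ h.2)
      (fun hn' => (hm hn').1) (fun hn' => (hm hn').2.1)
      (fun a ha hb => (key a).1 ⟨ha, hb⟩)
  · exact pair_false R hrect hdist v _ _ (hcov _ h.1) (hcov _ h.2)
      (fun hn' => (hm hn').1) (fun hn' => (hm hn').2.2.1)
      (fun a ha hb => (key a).2.1 ⟨ha, hb⟩)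
  · exact pair_false R hrect hdist v _ _ (hcov _ h.1) (hcov _ h.2)
      (fun hn' => (hm hn').1) (fun hn' => (hm hn').2.2.2)
      (fun a ha hb => (key a).2.2.1 ⟨ha, hb⟩)
  · exact pair_false R hrect hdist v _ _ (hcov _ h.1) (hcov _ h.2)
      (fun hn' => (hm hn').2.1) (fun hn' => (hm hn').2.2.1)
      (fun a ha hb => (key a).2.2.2.1 ⟨ha, hb⟩)
  · exact pair_false R hrect hdist v _ _ (hcov _ h.1) (hcov _ h.2)
      (fun hn' => (hm hn').2.1) (fun hn' => (hm hn').2.2.2)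
      (fun a ha hb => (key a).2.2.2.2.1 ⟨ha, hb⟩)
  · exact pair_false R hrect hdist v _ _ (hcov _ h.1) (hcov _ h.2)
      (fun hn' => (hm hn').2.2.1) (fun hn' => (hm hn').2.2.2)
      (fun a ha hb => (key a).2.2.2.2.2 ⟨ha, hb⟩)

/-- Biased majority model on the torus with von Neumann neighborhood: if in some
generation all blue cells are contained in a union of axis-aligned rectangles whose
pairwise Moore distance is at least 2 (i.e. Moore-graph distance at least 3) and which
do not cover the whole torus, then every cell outside these rectangles remains red in
all subsequent generations; in particular red survives forever. -/
theorem stmt18 (n : ℕ) (g : ZMod n × ZMod n → Bool) {ι : Type*}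
    (R : ι → Set (ZMod n × ZMod n)) (hrect : ∀ a, IsRect n (R a))
    (hdist : ∀ a b : ι, a ≠ b → ∀ u ∈ R a, ∀ v ∈ R b, 3 ≤ (mooreGraph n).dist u v)
    (hcover : ∀ v, g v = true → v ∈ ⋃ a, R a)
    (hne : (⋃ a, R a) ≠ Set.univ) :
    (∀ v, v ∉ (⋃ a, R a) → ∀ t : ℕ, (torusBMajStep n)^[t] g v = false) ∧
      (∀ t : ℕ, ∃ v, (torusBMajStep n)^[t] g v = false) := by
  have main : ∀ t : ℕ, ∀ v, (torusBMajStep n)^[t] g v = true → v ∈ ⋃ a, R a := by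
    intro t
    induction t with
    | zero => exact hcover
    | succ t ih =>
      intro v hvt
      by_contra hv
      rw [Function.iterate_succ_apply'] at hvt
      have hle := count_le_one R hrect hdist _ ih v hv
      simp only [torusBMajStep, decide_eq_true_eq] at hvt
      omega
  have outside : ∀ v, v ∉ (⋃ a, R a) → ∀ t : ℕ, (torusBMajStep n)^[t] g v = false := by
    intro v hv t
    cases h : (torusBMajStep n)^[t] g v with
    | false => rfl
    | true => exact absurd (main t v h) hv
  refine ⟨outside, fun t => ?_⟩
  obtain ⟨v, hv⟩ := (Set.ne_univ_iff_exists_notMem _).1 hne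
  exact ⟨v, outside v hv t⟩
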